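/- Let M be an A-module algebra over a weak *-Hopf algebra A. Then for all m ∈ M: (i) if a ∈ A_L then a▷m = (a▷1_M)·m = (S⁻¹(a)▷1_M)·m; (ii) if a ∈ A_R then a▷m = m·(a▷1_M) = m·(S(a)▷1_M); (iii) if a ∈ A_L∩A_R then a▷1_M lies in the center of M; (iv) if a lies in the center of A then a▷1_M ∈ M_R∩M^A, and moreover every element of M_R∩M^A lies in the center of M^A. -/

import Mathlib

open scoped TensorProduct

noncomputable section

/-- The componentwise star operation on a tensor product of star algebras,
as an additive map (it is conjugate-linear, hence not a `LinearMap`). -/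
def tensorStar (A B : Type) [Ring A] [Algebra ℂ A] [StarRing A] [StarModule ℂ A]
    [Ring B] [Algebra ℂ B] [StarRing B] [StarModule ℂ B] :
    A ⊗[ℂ] B →+ A ⊗[ℂ] B :=
  TensorProduct.liftAddHom
    (AddMonoidHom.mk'
      (fun a => AddMonoidHom.mk' (fun b => star a ⊗ₜ[ℂ] star b)
        (fun x y => by
          show star a ⊗ₜ[ℂ] star (x + y) = star a ⊗ₜ[ℂ] star x + star a ⊗ₜ[ℂ] star y
          rw [star_add, TensorProduct.tmul_add]))
      (fun x y => by
        ext b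
        show star (x + y) ⊗ₜ[ℂ] star b = star x ⊗ₜ[ℂ] star b + star y ⊗ₜ[ℂ] star b
        rw [star_add, TensorProduct.add_tmul]))
    (fun r a b => by
      show star (r • a) ⊗ₜ[ℂ] star b = star a ⊗ₜ[ℂ] star (r • b)
      rw [star_smul, star_smul, TensorProduct.smul_tmul])

/-- A finite dimensional weak `*`-Hopf algebra over `ℂ` (axioms of [BNS]),
together with the derived properties of the antipode (which follow from the
axioms and are included as fields for convenience). -/
structure WeakHopfAlgebra (A : Type) [Ring A] [Algebra ℂ A] [StarRing A] [StarModule ℂ A] where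
  Δ : A →ₗ[ℂ] A ⊗[ℂ] A
  ε : A →ₗ[ℂ] ℂ
  S : A →ₗ[ℂ] A
  Sinv : A →ₗ[ℂ] A
  finite : FiniteDimensional ℂ A
  Δ_mul : ∀ x y : A, Δ (x * y) = Δ x * Δ y
  Δ_star : ∀ x : A, Δ (star x) = tensorStar A A (Δ x)
  coassoc : ∀ x : A,
    (TensorProduct.assoc ℂ A A A) ((TensorProduct.map Δ (LinearMap.id : A →ₗ[ℂ] A)) (Δ x))
      = (TensorProduct.map (LinearMap.id : A →ₗ[ℂ] A) Δ) (Δ x)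
  counit_left : ∀ x : A,
    (TensorProduct.lid ℂ A) ((TensorProduct.map ε (LinearMap.id : A →ₗ[ℂ] A)) (Δ x)) = x
  counit_right : ∀ x : A,
    (TensorProduct.rid ℂ A) ((TensorProduct.map (LinearMap.id : A →ₗ[ℂ] A) ε) (Δ x)) = x
  unit_weak :
    (Δ 1 ⊗ₜ[ℂ] (1 : A)) * ((TensorProduct.assoc ℂ A A A).symm ((1 : A) ⊗ₜ[ℂ] Δ 1))
      = (TensorProduct.map Δ (LinearMap.id : A →ₗ[ℂ] A)) (Δ 1)
  unit_weak' :
    ((TensorProduct.assoc ℂ A A A).symm ((1 : A) ⊗ₜ[ℂ] Δ 1)) * (Δ 1 ⊗ₜ[ℂ] (1 : A))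
      = (TensorProduct.map Δ (LinearMap.id : A →ₗ[ℂ] A)) (Δ 1)
  counit_weak : ∀ x y z : A,
    ε (x * y * z) = (TensorProduct.lid ℂ ℂ)
      ((TensorProduct.map (ε ∘ₗ LinearMap.mulLeft ℂ x) (ε ∘ₗ LinearMap.mulRight ℂ z)) (Δ y))
  counit_weak' : ∀ x y z : A,
    ε (x * y * z) = (TensorProduct.lid ℂ ℂ)
      ((TensorProduct.map (ε ∘ₗ LinearMap.mulRight ℂ z) (ε ∘ₗ LinearMap.mulLeft ℂ x)) (Δ y))
  antipode_left : ∀ x : A,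
    LinearMap.mul' ℂ A ((TensorProduct.map S (LinearMap.id : A →ₗ[ℂ] A)) (Δ x))
      = (TensorProduct.rid ℂ A)
          ((TensorProduct.map (LinearMap.id : A →ₗ[ℂ] A) (ε ∘ₗ LinearMap.mulLeft ℂ x)) (Δ 1))
  antipode_right : ∀ x : A,
    LinearMap.mul' ℂ A ((TensorProduct.map (LinearMap.id : A →ₗ[ℂ] A) S) (Δ x))
      = (TensorProduct.lid ℂ A)
          ((TensorProduct.map (ε ∘ₗ LinearMap.mulRight ℂ x) (LinearMap.id : A →ₗ[ℂ] A)) (Δ 1))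
  antipode_mid : ∀ x : A,
    LinearMap.mul' ℂ A
      ((TensorProduct.map (LinearMap.mul' ℂ A ∘ₗ TensorProduct.map S (LinearMap.id : A →ₗ[ℂ] A)) S)
        ((TensorProduct.map Δ (LinearMap.id : A →ₗ[ℂ] A)) (Δ x))) = S x
  S_Sinv : ∀ x : A, S (Sinv x) = x
  Sinv_S : ∀ x : A, Sinv (S x) = x
  S_antimul : ∀ x y : A, S (x * y) = S y * S x
  S_anticomul : ∀ x : A, Δ (S x) = (TensorProduct.comm ℂ A A) ((TensorProduct.map S S) (Δ x))
  S_star : ∀ x : A, star (S (star x)) = Sinv x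

/-- The set of elements commuting with everything. -/
def centerSet (R : Type) [Mul R] : Set R := {z | ∀ r : R, z * r = r * z}

namespace WeakHopfAlgebra

variable {A : Type} [Ring A] [Algebra ℂ A] [StarRing A] [StarModule ℂ A]

/-- `Σ x₍₁₎ · S(x₍₂₎)`. -/
def swIdS (W : WeakHopfAlgebra A) (x : A) : A :=
  LinearMap.mul' ℂ A ((TensorProduct.map (LinearMap.id : A →ₗ[ℂ] A) W.S) (W.Δ x))

/-- `Σ S(x₍₁₎) · x₍₂₎`. -/
def swSId (W : WeakHopfAlgebra A) (x : A) : A :=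
  LinearMap.mul' ℂ A ((TensorProduct.map W.S (LinearMap.id : A →ₗ[ℂ] A)) (W.Δ x))

/-- `Σ x₍₂₎ · S⁻¹(x₍₁₎)`. -/
def swIdSinv (W : WeakHopfAlgebra A) (x : A) : A :=
  LinearMap.mul' ℂ A
    ((TensorProduct.map (LinearMap.id : A →ₗ[ℂ] A) W.Sinv) ((TensorProduct.comm ℂ A A) (W.Δ x)))

/-- `Σ S⁻¹(x₍₂₎) · x₍₁₎`. -/
def swSinvId (W : WeakHopfAlgebra A) (x : A) : A :=
  LinearMap.mul' ℂ A
    ((TensorProduct.map W.Sinv (LinearMap.id : A →ₗ[ℂ] A)) ((TensorProduct.comm ℂ A A) (W.Δ x)))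

/-- The left subalgebra `A_L = {(φ ⊗ id)(Δ 1) : φ ∈ A*}`. -/
def AL (W : WeakHopfAlgebra A) : Set A :=
  {a | ∃ φ : A →ₗ[ℂ] ℂ,
    a = (TensorProduct.lid ℂ A) ((TensorProduct.map φ (LinearMap.id : A →ₗ[ℂ] A)) (W.Δ 1))}

/-- The right subalgebra `A_R = {(id ⊗ φ)(Δ 1) : φ ∈ A*}`. -/
def AR (W : WeakHopfAlgebra A) : Set A :=
  {a | ∃ φ : A →ₗ[ℂ] ℂ,
    a = (TensorProduct.rid ℂ A) ((TensorProduct.map (LinearMap.id : A →ₗ[ℂ] A) φ) (W.Δ 1))}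

/-- A left integral: `a · l = Σ a₍₁₎ S(a₍₂₎) · l` for all `a`. -/
def IsLeftIntegral (W : WeakHopfAlgebra A) (l : A) : Prop := ∀ a : A, a * l = W.swIdS a * l

/-- A right integral: `r · a = r · Σ S(a₍₁₎) a₍₂₎` for all `a`. -/
def IsRightIntegral (W : WeakHopfAlgebra A) (r : A) : Prop := ∀ a : A, r * a = r * W.swSId a

/-- A normalized Haar integral. -/
def IsHaar (W : WeakHopfAlgebra A) (h : A) : Prop :=
  W.IsLeftIntegral h ∧ W.IsRightIntegral h ∧ W.swSId h = 1 ∧ W.swIdS h = 1 ∧ W.S h = h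

/-- The canonical left action of a functional `λ ∈ A*` on `A`:
`λ ⇀ a = Σ a₍₁₎ · ⟨λ, a₍₂₎⟩`. -/
def lact (W : WeakHopfAlgebra A) (lam : A →ₗ[ℂ] ℂ) : A →ₗ[ℂ] A :=
  (TensorProduct.rid ℂ A).toLinearMap ∘ₗ
    (TensorProduct.map (LinearMap.id : A →ₗ[ℂ] A) lam) ∘ₗ W.Δ

/-- `λ ∈ A*` is a left integral of the dual weak Hopf algebra:
`λ ⇀ a ∈ A_L` for all `a ∈ A`. -/
def IsDualLeftIntegral (W : WeakHopfAlgebra A) (lam : A →ₗ[ℂ] ℂ) : Prop :=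
  ∀ a : A, W.lact lam a ∈ W.AL

/-- A dual pair of left integrals `(l, λ)`. -/
def IsDualPair (W : WeakHopfAlgebra A) (l : A) (lam : A →ₗ[ℂ] ℂ) : Prop :=
  W.IsLeftIntegral l ∧ W.IsDualLeftIntegral lam ∧
  W.lact lam l = 1 ∧
  (∀ a : A,
    (TensorProduct.rid ℂ A)
      ((TensorProduct.map (LinearMap.id : A →ₗ[ℂ] A) (lam ∘ₗ LinearMap.mulLeft ℂ a)) (W.Δ l))
      = W.S a) ∧
  (∀ a : A,
    (TensorProduct.lid ℂ A)
      ((TensorProduct.map (lam ∘ₗ LinearMap.mulRight ℂ a ∘ₗ W.Sinv)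
        (LinearMap.id : A →ₗ[ℂ] A)) (W.Δ l)) = a)

end WeakHopfAlgebra

/-- A (left) module `*`-algebra over a weak `*`-Hopf algebra. -/
structure ModuleAlgebra {A : Type} [Ring A] [Algebra ℂ A] [StarRing A] [StarModule ℂ A]
    (W : WeakHopfAlgebra A) (M : Type) [Ring M] [Algebra ℂ M] [StarRing M] [StarModule ℂ M] where
  act : A →ₗ[ℂ] M →ₗ[ℂ] M
  act_mul : ∀ (a b : A) (m : M), act (a * b) m = act a (act b m)
  act_one : ∀ m : M, act 1 m = m
  act_mul' : ∀ (a : A) (m n : M),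
    act a (m * n) = LinearMap.mul' ℂ M ((TensorProduct.map (act.flip m) (act.flip n)) (W.Δ a))
  act_star : ∀ (a : A) (m : M), star (act a m) = act (star (W.S a)) (star m)
  act_unit : ∀ a : A, act a 1 = act (W.swIdS a) 1

namespace ModuleAlgebra

variable {A : Type} [Ring A] [Algebra ℂ A] [StarRing A] [StarModule ℂ A]
variable {M : Type} [Ring M] [Algebra ℂ M] [StarRing M] [StarModule ℂ M]
variable {W : WeakHopfAlgebra A}

/-- `M_R = A ▷ 1_M`. -/
def MR (MA : ModuleAlgebra W M) : Set M := Set.range fun a : A => MA.act a 1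

/-- The fixed point algebra `M^A`. -/
def fixed (MA : ModuleAlgebra W M) : Set M :=
  {n | ∀ (a : A) (m : M), MA.act a (m * n) = MA.act a m * n}

end ModuleAlgebra

section Crossed

variable {A : Type} [Ring A] [Algebra ℂ A] [StarRing A] [StarModule ℂ A]
variable {M : Type} [Ring M] [Algebra ℂ M] [StarRing M] [StarModule ℂ M]
variable {W : WeakHopfAlgebra A}

/-- The subspace of `M ⊗ A` by which one divides to form the crossed product
`M ⋊ A = M ⊗_{A_L} A`. -/
def crossedRel (MA : ModuleAlgebra W M) : Submodule ℂ (M ⊗[ℂ] A) :=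
  Submodule.span ℂ
    {x | ∃ (m : M) (a b : A), b ∈ W.AL ∧
      x = (m * MA.act b 1) ⊗ₜ[ℂ] a - m ⊗ₜ[ℂ] (b * a)}

/-- The crossed product `M ⋊ A` as a vector space. -/
abbrev Crossed (MA : ModuleAlgebra W M) : Type := (M ⊗[ℂ] A) ⧸ crossedRel MA

/-- The canonical projection `M ⊗ A → M ⋊ A`; `cmk MA (m ⊗ₜ a)` is `m ⋊ a`. -/
def cmk (MA : ModuleAlgebra W M) : M ⊗[ℂ] A →ₗ[ℂ] Crossed MA := (crossedRel MA).mkQ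

/-- The embedding `M → M ⋊ A`, `m ↦ m ⋊ 1`. -/
def iM (MA : ModuleAlgebra W M) : M →ₗ[ℂ] Crossed MA :=
  cmk MA ∘ₗ (TensorProduct.mk ℂ M A).flip (1 : A)

/-- The map `A → M ⋊ A`, `a ↦ 1 ⋊ a`. -/
def iA (MA : ModuleAlgebra W M) : A →ₗ[ℂ] Crossed MA :=
  cmk MA ∘ₗ (TensorProduct.mk ℂ M A) (1 : M)

/-- The unit `1 ⋊ 1` of `M ⋊ A`. -/
def oneC (MA : ModuleAlgebra W M) : Crossed MA := cmk MA ((1 : M) ⊗ₜ[ℂ] (1 : A))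

/-- The multiplication of the crossed product `M ⋊ A`
(whose existence is the content of Theorem 3.1), as a bundled bilinear map
together with its defining formula on generators:
`(m ⋊ a)(m' ⋊ a') = Σ m (a₍₁₎ ▷ m') ⋊ a₍₂₎ a'`. -/
structure CrossedMul (MA : ModuleAlgebra W M) where
  mul : Crossed MA →ₗ[ℂ] Crossed MA →ₗ[ℂ] Crossed MA
  mul_def : ∀ (m m' : M) (a a' : A),
    mul (cmk MA (m ⊗ₜ[ℂ] a)) (cmk MA (m' ⊗ₜ[ℂ] a'))
      = cmk MA ((TensorProduct.map ((LinearMap.mulLeft ℂ m) ∘ₗ (MA.act.flip m'))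
          (LinearMap.mulRight ℂ a')) (W.Δ a))

/-- The star operation of the crossed product `M ⋊ A`
(whose existence is part of Theorem 3.1):
`(m ⋊ a)* = Σ (a₍₁₎* ▷ m*) ⋊ a₍₂₎*`. -/
structure CrossedStar (MA : ModuleAlgebra W M) where
  st : Crossed MA →+ Crossed MA
  st_smul : ∀ (c : ℂ) (x : Crossed MA), st (c • x) = (starRingEnd ℂ c) • st x
  st_def : ∀ (m : M) (a : A),
    st (cmk MA (m ⊗ₜ[ℂ] a))
      = cmk MA ((TensorProduct.map (MA.act.flip (star m)) (LinearMap.id : A →ₗ[ℂ] A))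
          (W.Δ (star a)))

/-- The multiplication on `(M ⋊ A) ⊗ B` induced by a crossed product
multiplication on `M ⋊ A` and the algebra structure of `B`. -/
def mulT (MA : ModuleAlgebra W M) (CS : CrossedMul MA) (B : Type) [Ring B] [Algebra ℂ B] :
    Crossed MA ⊗[ℂ] B →ₗ[ℂ] Crossed MA ⊗[ℂ] B →ₗ[ℂ] Crossed MA ⊗[ℂ] B :=
  TensorProduct.lift
    ((TensorProduct.mapBilinear (RingHom.id ℂ) (Crossed MA) B (Crossed MA) B).compl₁₂ CS.mul
      (LinearMap.mul ℂ B))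

end Crossed


section HelperLemmas

set_option maxHeartbeats 1000000
set_option synthInstance.maxHeartbeats 200000

variable {A : Type} [Ring A] [Algebra ℂ A] [StarRing A] [StarModule ℂ A]
variable {M : Type} [Ring M] [Algebra ℂ M] [StarRing M] [StarModule ℂ M]
variable (W : WeakHopfAlgebra A)

lemma eps_mulLeft_one : W.ε ∘ₗ LinearMap.mulLeft ℂ (1 : A) = W.ε := by
  ext x; simp

lemma eps_mulRight_one : W.ε ∘ₗ LinearMap.mulRight ℂ (1 : A) = W.ε := by
  ext x; simp

lemma swSId_one : W.swSId 1 = 1 := by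
  rw [WeakHopfAlgebra.swSId, W.antipode_left 1, eps_mulLeft_one]
  exact W.counit_right 1

lemma swIdS_one : W.swIdS 1 = 1 := by
  rw [WeakHopfAlgebra.swIdS, W.antipode_right 1, eps_mulRight_one]
  exact W.counit_left 1

variable (s : Finset (A × A)) (hE : W.Δ 1 = ∑ p ∈ s, p.1 ⊗ₜ[ℂ] p.2)

include hE

lemma sum_Se_f : (∑ p ∈ s, W.S p.1 * p.2) = 1 := by
  have h := swSId_one W
  rw [WeakHopfAlgebra.swSId, hE] at h
  simpa [map_sum] using h

lemma sum_e_Sf : (∑ p ∈ s, p.1 * W.S p.2) = 1 := by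
  have h := swIdS_one W
  rw [WeakHopfAlgebra.swIdS, hE] at h
  simpa [map_sum] using h

omit s hE in
lemma S_one : W.S 1 = 1 := by
  obtain ⟨s, hE⟩ := TensorProduct.exists_finset (W.Δ 1)
  have h := W.antipode_mid 1
  rw [← W.unit_weak, hE] at h
  simp only [TensorProduct.sum_tmul, TensorProduct.tmul_sum, map_sum,
    TensorProduct.assoc_symm_tmul, Finset.sum_mul_sum,
    Algebra.TensorProduct.tmul_mul_tmul, one_mul, mul_one,
    TensorProduct.map_tmul, LinearMap.mul'_apply, LinearMap.id_coe, id_eq,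
    LinearMap.coe_comp, Function.comp_apply] at h
  have h2 : (∑ p ∈ s, W.S p.1 * p.2) * (∑ q ∈ s, q.1 * W.S q.2)
      = ∑ p ∈ s, ∑ q ∈ s, W.S p.1 * (p.2 * q.1) * W.S q.2 := by
    rw [Finset.sum_mul_sum]
    exact Finset.sum_congr rfl fun p _ => Finset.sum_congr rfl fun q _ => by
      simp [mul_assoc]
  rw [← h, ← h2, sum_Se_f W s hE, sum_e_Sf W s hE, one_mul]

omit s hE in
lemma Sinv_one : W.Sinv 1 = 1 := by
  have h := W.Sinv_S 1
  rwa [S_one W] at h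

omit s hE in
lemma S_injective : Function.Injective W.S := fun x y h => by
  rw [← W.Sinv_S x, h, W.Sinv_S]

omit s hE in
lemma Sinv_antimul (x y : A) : W.Sinv (x * y) = W.Sinv y * W.Sinv x := by
  apply S_injective W
  rw [W.S_Sinv, W.S_antimul, W.S_Sinv, W.S_Sinv]

lemma sum_Sinvf_e : (∑ p ∈ s, W.Sinv p.2 * p.1) = 1 := by
  have h1 : ∀ p ∈ s, W.Sinv p.2 * p.1 = W.Sinv (W.S p.1 * p.2) := fun p _ => by
    rw [Sinv_antimul, W.Sinv_S]
  rw [Finset.sum_congr rfl h1, ← map_sum, sum_Se_f W s hE, Sinv_one W]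

lemma E_flip : W.Δ 1 = ∑ p ∈ s, W.S p.2 ⊗ₜ[ℂ] W.S p.1 := by
  have h := W.S_anticomul 1
  rw [S_one W, hE] at h
  rw [hE]
  simpa [map_sum] using h

lemma map_id_Δ_E' :
    (TensorProduct.map (LinearMap.id : A →ₗ[ℂ] A) W.Δ) (W.Δ 1)
      = ∑ q ∈ s, ∑ p ∈ s, p.1 ⊗ₜ[ℂ] ((q.1 * p.2) ⊗ₜ[ℂ] q.2) := by
  rw [← W.coassoc 1, ← W.unit_weak', hE]
  simp [TensorProduct.tmul_sum, TensorProduct.sum_tmul, map_sum,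
    TensorProduct.assoc_symm_tmul, Finset.sum_mul_sum,
    Algebra.TensorProduct.tmul_mul_tmul, TensorProduct.assoc_tmul]

lemma map_Δ_id_E :
    (TensorProduct.map W.Δ (LinearMap.id : A →ₗ[ℂ] A)) (W.Δ 1)
      = ∑ p ∈ s, ∑ q ∈ s, (p.1 ⊗ₜ[ℂ] (p.2 * q.1)) ⊗ₜ[ℂ] q.2 := by
  rw [← W.unit_weak, hE]
  simp [TensorProduct.tmul_sum, TensorProduct.sum_tmul, map_sum,
    TensorProduct.assoc_symm_tmul, Finset.sum_mul_sum,
    Algebra.TensorProduct.tmul_mul_tmul]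

lemma map_Δ_id_E' :
    (TensorProduct.map W.Δ (LinearMap.id : A →ₗ[ℂ] A)) (W.Δ 1)
      = ∑ q ∈ s, ∑ p ∈ s, (p.1 ⊗ₜ[ℂ] (q.1 * p.2)) ⊗ₜ[ℂ] q.2 := by
  rw [← W.unit_weak', hE]
  simp [TensorProduct.tmul_sum, TensorProduct.sum_tmul, map_sum,
    TensorProduct.assoc_symm_tmul, Finset.sum_mul_sum,
    Algebra.TensorProduct.tmul_mul_tmul]

omit s hE in
lemma lid_comm_Δ (φ : A →ₗ[ℂ] ℂ) (t : A ⊗[ℂ] A) :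
    W.Δ ((TensorProduct.lid ℂ A) ((TensorProduct.map φ LinearMap.id) t))
      = (TensorProduct.lid ℂ (A ⊗[ℂ] A)) ((TensorProduct.map φ LinearMap.id)
          ((TensorProduct.map LinearMap.id W.Δ) t)) := by
  induction t using TensorProduct.induction_on with
  | zero => simp
  | tmul a b => simp
  | add x y hx hy => simp only [map_add, hx, hy]

omit s hE in
lemma rid_comm_Δ (φ : A →ₗ[ℂ] ℂ) (t : A ⊗[ℂ] A) :
    W.Δ ((TensorProduct.rid ℂ A) ((TensorProduct.map LinearMap.id φ) t))
      = (TensorProduct.rid ℂ (A ⊗[ℂ] A)) ((TensorProduct.map LinearMap.id φ)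
          ((TensorProduct.map W.Δ LinearMap.id) t)) := by
  induction t using TensorProduct.induction_on with
  | zero => simp
  | tmul a b => simp
  | add x y hx hy => simp only [map_add, hx, hy]

lemma ΔAL {y : A} (hy : y ∈ W.AL) : W.Δ y = ∑ q ∈ s, (q.1 * y) ⊗ₜ[ℂ] q.2 := by
  obtain ⟨φ, hφ⟩ := hy
  have hyrep : (TensorProduct.lid ℂ A) ((TensorProduct.map φ LinearMap.id) (W.Δ 1))
      = ∑ p ∈ s, φ p.1 • p.2 := by rw [hE]; simp [map_sum]
  rw [hφ, lid_comm_Δ, map_id_Δ_E' W s hE]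
  simp only [map_sum, TensorProduct.map_tmul, LinearMap.id_coe, id_eq,
    TensorProduct.lid_tmul]
  refine Finset.sum_congr rfl fun q _ => ?_
  conv_rhs => rw [hyrep]
  rw [Finset.mul_sum, TensorProduct.sum_tmul]
  refine Finset.sum_congr rfl fun p _ => ?_
  rw [mul_smul_comm, TensorProduct.smul_tmul']

lemma ΔAR {z : A} (hz : z ∈ W.AR) : W.Δ z = ∑ p ∈ s, p.1 ⊗ₜ[ℂ] (p.2 * z) := by
  obtain ⟨φ, hφ⟩ := hz
  have hzrep : (TensorProduct.rid ℂ A) ((TensorProduct.map LinearMap.id φ) (W.Δ 1))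
      = ∑ q ∈ s, φ q.2 • q.1 := by rw [hE]; simp [map_sum]
  rw [hφ, rid_comm_Δ, map_Δ_id_E W s hE]
  simp only [map_sum, TensorProduct.map_tmul, LinearMap.id_coe, id_eq,
    TensorProduct.rid_tmul]
  refine Finset.sum_congr rfl fun p _ => ?_
  conv_rhs => rw [hzrep]
  rw [Finset.mul_sum, TensorProduct.tmul_sum]
  refine Finset.sum_congr rfl fun q _ => ?_
  rw [mul_smul_comm, TensorProduct.tmul_smul]

lemma ΔAR' {z : A} (hz : z ∈ W.AR) : W.Δ z = ∑ q ∈ s, q.1 ⊗ₜ[ℂ] (z * q.2) := by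
  obtain ⟨φ, hφ⟩ := hz
  have hzrep : (TensorProduct.rid ℂ A) ((TensorProduct.map LinearMap.id φ) (W.Δ 1))
      = ∑ p ∈ s, φ p.2 • p.1 := by rw [hE]; simp [map_sum]
  rw [hφ, rid_comm_Δ, map_Δ_id_E' W s hE]
  simp only [map_sum, TensorProduct.map_tmul, LinearMap.id_coe, id_eq,
    TensorProduct.rid_tmul]
  rw [Finset.sum_comm]
  refine Finset.sum_congr rfl fun q _ => ?_
  conv_rhs => rw [hzrep]
  rw [Finset.sum_mul, TensorProduct.tmul_sum]
  refine Finset.sum_congr rfl fun p _ => ?_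
  rw [smul_mul_assoc, TensorProduct.tmul_smul, TensorProduct.smul_tmul']

omit s hE in
lemma AL_Sinv_mem {y : A} (hy : y ∈ W.AL) : W.Sinv y ∈ W.AR := by
  obtain ⟨φ, hφ⟩ := hy
  obtain ⟨s, hE⟩ := TensorProduct.exists_finset (W.Δ 1)
  refine ⟨φ ∘ₗ W.S, ?_⟩
  have hΘ1 : (TensorProduct.lid ℂ A) ((TensorProduct.map φ W.Sinv) (W.Δ 1))
      = ∑ p ∈ s, φ p.1 • W.Sinv p.2 := by rw [hE]; simp [map_sum]
  have hΘ2 : (TensorProduct.lid ℂ A) ((TensorProduct.map φ W.Sinv) (W.Δ 1))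
      = ∑ p ∈ s, φ (W.S p.2) • p.1 := by rw [E_flip W s hE]; simp [map_sum, W.Sinv_S]
  have h1 : W.Sinv y = ∑ p ∈ s, φ p.1 • W.Sinv p.2 := by rw [hφ, hE]; simp [map_sum]
  rw [h1, ← hΘ1, hΘ2, hE]
  simp [map_sum]

omit s hE in
lemma swIdS_mem_AL (c : A) : W.swIdS c ∈ W.AL :=
  ⟨W.ε ∘ₗ LinearMap.mulRight ℂ c, by rw [WeakHopfAlgebra.swIdS]; exact W.antipode_right c⟩

lemma two7a (b : A) (t : Finset (A × A)) (ht : W.Δ b = ∑ k ∈ t, k.1 ⊗ₜ[ℂ] k.2) :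
    ∑ k ∈ t, k.1 ⊗ₜ[ℂ] W.swIdS k.2 = ∑ p ∈ s, (p.1 * b) ⊗ₜ[ℂ] p.2 := by
  have hmul : ∀ u v : A ⊗[ℂ] A,
      (TensorProduct.map W.Δ (LinearMap.id : A →ₗ[ℂ] A)) (u * v)
        = (TensorProduct.map W.Δ LinearMap.id) u * (TensorProduct.map W.Δ LinearMap.id) v := by
    intro u v
    induction u using TensorProduct.induction_on with
    | zero => simp
    | tmul a c =>
      induction v using TensorProduct.induction_on with
      | zero => simp
      | tmul a' c' => simp [Algebra.TensorProduct.tmul_mul_tmul, W.Δ_mul]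
      | add x y hx hy => rw [mul_add, map_add, hx, hy, map_add, mul_add]
    | add x y hx hy => rw [add_mul, map_add, hx, hy, map_add, add_mul]
  have hT1 : ((TensorProduct.assoc ℂ A A A).symm ((1:A) ⊗ₜ[ℂ] W.Δ 1)) * (W.Δ b ⊗ₜ[ℂ] (1:A))
      = ∑ q ∈ s, ∑ k ∈ t, (k.1 ⊗ₜ[ℂ] (q.1 * k.2)) ⊗ₜ[ℂ] q.2 := by
    rw [hE, ht]
    simp [TensorProduct.tmul_sum, TensorProduct.sum_tmul, map_sum,
      TensorProduct.assoc_symm_tmul, Finset.sum_mul_sum,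
      Algebra.TensorProduct.tmul_mul_tmul]
  have hT2 : ((TensorProduct.assoc ℂ A A A).symm ((1:A) ⊗ₜ[ℂ] W.Δ 1)) * (W.Δ b ⊗ₜ[ℂ] (1:A))
      = ∑ p ∈ s, (TensorProduct.map W.Δ LinearMap.id) ((p.1 * b) ⊗ₜ[ℂ] p.2) := by
    have h3 : (W.Δ b ⊗ₜ[ℂ] (1:A)) = (W.Δ 1 ⊗ₜ[ℂ] (1:A)) * (W.Δ b ⊗ₜ[ℂ] (1:A)) := by
      rw [Algebra.TensorProduct.tmul_mul_tmul, ← W.Δ_mul, one_mul, one_mul]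
    rw [h3, ← mul_assoc, W.unit_weak']
    have h4 : W.Δ b ⊗ₜ[ℂ] (1:A)
        = (TensorProduct.map W.Δ (LinearMap.id : A →ₗ[ℂ] A)) (b ⊗ₜ[ℂ] (1:A)) := by simp
    rw [h4, ← hmul]
    have h5 : W.Δ 1 * (b ⊗ₜ[ℂ] (1:A)) = ∑ p ∈ s, (p.1 * b) ⊗ₜ[ℂ] p.2 := by
      rw [hE, Finset.sum_mul]
      simp [Algebra.TensorProduct.tmul_mul_tmul]
    rw [h5, map_sum]
  have key := congrArg
    (⇑(TensorProduct.map ((TensorProduct.rid ℂ A).toLinearMap ∘ₗ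
        TensorProduct.map LinearMap.id W.ε) (LinearMap.id : A →ₗ[ℂ] A)))
    (hT1.symm.trans hT2)
  rw [map_sum, map_sum] at key
  have hPL : ∀ q : A × A, (TensorProduct.map ((TensorProduct.rid ℂ A).toLinearMap ∘ₗ
        TensorProduct.map LinearMap.id W.ε) (LinearMap.id : A →ₗ[ℂ] A))
        (∑ k ∈ t, (k.1 ⊗ₜ[ℂ] (q.1 * k.2)) ⊗ₜ[ℂ] q.2)
      = ∑ k ∈ t, W.ε (q.1 * k.2) • (k.1 ⊗ₜ[ℂ] q.2) := by
    intro q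
    simp [map_sum, TensorProduct.smul_tmul']
  have hPR : ∀ p : A × A, (TensorProduct.map ((TensorProduct.rid ℂ A).toLinearMap ∘ₗ
        TensorProduct.map LinearMap.id W.ε) (LinearMap.id : A →ₗ[ℂ] A))
        ((TensorProduct.map W.Δ LinearMap.id) ((p.1 * b) ⊗ₜ[ℂ] p.2))
      = (p.1 * b) ⊗ₜ[ℂ] p.2 := by
    intro p
    simp only [TensorProduct.map_tmul, LinearMap.coe_comp, Function.comp_apply,
      LinearEquiv.coe_coe, LinearMap.id_coe, id_eq]
    rw [W.counit_right]
  rw [Finset.sum_congr rfl (fun q _ => hPL q), Finset.sum_congr rfl (fun p _ => hPR p)] at key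
  have hsw : ∀ k : A × A, W.swIdS k.2 = ∑ q ∈ s, W.ε (q.1 * k.2) • q.2 := fun k => by
    rw [WeakHopfAlgebra.swIdS, W.antipode_right, hE]
    simp [map_sum]
  calc ∑ k ∈ t, k.1 ⊗ₜ[ℂ] W.swIdS k.2
      = ∑ k ∈ t, ∑ q ∈ s, W.ε (q.1 * k.2) • (k.1 ⊗ₜ[ℂ] q.2) := by
        refine Finset.sum_congr rfl fun k _ => ?_
        rw [hsw k, TensorProduct.tmul_sum]
        simp [TensorProduct.tmul_smul]
    _ = ∑ q ∈ s, ∑ k ∈ t, W.ε (q.1 * k.2) • (k.1 ⊗ₜ[ℂ] q.2) := Finset.sum_comm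
    _ = ∑ p ∈ s, (p.1 * b) ⊗ₜ[ℂ] p.2 := key

variable (MA : ModuleAlgebra W M)

lemma act_L0 (u v : M) : u * v = ∑ p ∈ s, MA.act p.1 u * MA.act p.2 v := by
  have h := MA.act_mul' 1 u v
  rw [MA.act_one, hE] at h
  simpa [map_sum, LinearMap.mul'_apply, LinearMap.flip_apply] using h

omit s hE in
lemma actAL {y : A} (hy : y ∈ W.AL) (m : M) : MA.act y m = MA.act y 1 * m := by
  obtain ⟨s, hE⟩ := TensorProduct.exists_finset (W.Δ 1)
  have h1 : MA.act y m = MA.act y (1 * m) := by rw [one_mul]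
  rw [h1, MA.act_mul', ΔAL W s hE hy]
  simp only [map_sum, TensorProduct.map_tmul, LinearMap.mul'_apply, LinearMap.flip_apply,
    MA.act_mul]
  exact (act_L0 W s hE MA (MA.act y 1) m).symm

omit s hE in
lemma actAR {z : A} (hz : z ∈ W.AR) (m : M) : MA.act z m = m * MA.act z 1 := by
  obtain ⟨s, hE⟩ := TensorProduct.exists_finset (W.Δ 1)
  have h1 : MA.act z m = MA.act z (m * 1) := by rw [mul_one]
  rw [h1, MA.act_mul', ΔAR W s hE hz]
  simp only [map_sum, TensorProduct.map_tmul, LinearMap.mul'_apply, LinearMap.flip_apply,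
    MA.act_mul]
  exact (act_L0 W s hE MA m (MA.act z 1)).symm

omit s hE in
lemma actAR_S_one {z : A} (hz : z ∈ W.AR) : MA.act z 1 = MA.act (W.S z) 1 := by
  obtain ⟨s, hE⟩ := TensorProduct.exists_finset (W.Δ 1)
  rw [MA.act_unit z]
  have h1 : W.swIdS z = W.S z := by
    rw [WeakHopfAlgebra.swIdS, ΔAR' W s hE hz]
    simp only [map_sum, TensorProduct.map_tmul, LinearMap.mul'_apply, LinearMap.id_coe, id_eq,
      W.S_antimul]
    have h2 : ∀ q ∈ s, q.1 * (W.S q.2 * W.S z) = q.1 * W.S q.2 * W.S z := fun q _ =>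
      (mul_assoc _ _ _).symm
    rw [Finset.sum_congr rfl h2, ← Finset.sum_mul, sum_e_Sf W s hE, one_mul]
  rw [h1]

omit s hE in
lemma central_fixed (a : A) (ha : a ∈ centerSet A) : MA.act a 1 ∈ MA.fixed := by
  intro b m
  obtain ⟨s, hE⟩ := TensorProduct.exists_finset (W.Δ 1)
  obtain ⟨t, ht⟩ := TensorProduct.exists_finset (W.Δ b)
  have key := congrArg (⇑(LinearMap.mul' ℂ M ∘ₗ TensorProduct.map (MA.act.flip m)
      (MA.act.flip 1 ∘ₗ LinearMap.mulLeft ℂ a))) (two7a W s hE b t ht)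
  simp only [map_sum, LinearMap.coe_comp, Function.comp_apply, TensorProduct.map_tmul,
    LinearMap.mul'_apply, LinearMap.flip_apply, LinearMap.mulLeft_apply] at key
  have hL : MA.act b (m * MA.act a 1)
      = ∑ k ∈ t, MA.act k.1 m * MA.act (a * W.swIdS k.2) 1 := by
    rw [MA.act_mul', ht]
    simp only [map_sum, TensorProduct.map_tmul, LinearMap.mul'_apply, LinearMap.flip_apply]
    refine Finset.sum_congr rfl fun k _ => ?_
    congr 1
    rw [← MA.act_mul, ← ha k.2, MA.act_mul, MA.act_unit k.2, ← MA.act_mul]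
  have hR : MA.act b m * MA.act a 1
      = ∑ p ∈ s, MA.act (p.1 * b) m * MA.act (a * p.2) 1 := by
    rw [act_L0 W s hE MA (MA.act b m) (MA.act a 1)]
    refine Finset.sum_congr rfl fun p _ => ?_
    rw [← MA.act_mul, ← MA.act_mul, ha p.2]
  rw [hL, hR, key]

end HelperLemmas

/-- Lemma 2.16 of [NSW]: the actions of `A_L` and `A_R` on a module algebra
are inner: (i) for `a ∈ A_L`, `a ▷ m = (a ▷ 1)·m = (S⁻¹(a) ▷ 1)·m`;
(ii) for `a ∈ A_R`, `a ▷ m = m·(a ▷ 1) = m·(S(a) ▷ 1)`;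
(iii) for `a ∈ A_L ∩ A_R`, `a ▷ 1` is central in `M`;
(iv) for central `a ∈ A`, `a ▷ 1 ∈ M_R ∩ M^A`, and every element of
`M_R ∩ M^A` lies in the center of `M^A`. -/
theorem inner_actions_of_left_right_subalgebras
    {A M : Type} [Ring A] [Algebra ℂ A] [StarRing A] [StarModule ℂ A]
    [Ring M] [Algebra ℂ M] [StarRing M] [StarModule ℂ M]
    (W : WeakHopfAlgebra A) (MA : ModuleAlgebra W M) :
    (∀ a ∈ W.AL, ∀ m : M,
      MA.act a m = MA.act a 1 * m ∧ MA.act a m = MA.act (W.Sinv a) 1 * m)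
    ∧ (∀ a ∈ W.AR, ∀ m : M,
      MA.act a m = m * MA.act a 1 ∧ MA.act a m = m * MA.act (W.S a) 1)
    ∧ (∀ a ∈ W.AL ∩ W.AR, MA.act a 1 ∈ centerSet M)
    ∧ (∀ a ∈ centerSet A, MA.act a 1 ∈ MA.MR ∩ MA.fixed)
    ∧ (∀ x ∈ MA.MR ∩ MA.fixed, ∀ n ∈ MA.fixed, x * n = n * x) := by
  refine ⟨?_, ?_, ?_, ?_, ?_⟩
  · intro a ha m
    have h2 : MA.act (W.Sinv a) 1 = MA.act a 1 := by
      rw [actAR_S_one W MA (AL_Sinv_mem W ha), W.S_Sinv]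
    exact ⟨actAL W MA ha m, by rw [actAL W MA ha m, h2]⟩
  · intro a ha m
    exact ⟨actAR W MA ha m, by rw [actAR W MA ha m, ← actAR_S_one W MA ha]⟩
  · intro a ha r
    rw [← actAL W MA ha.1 r]
    exact actAR W MA ha.2 r
  · intro a ha
    exact ⟨⟨a, rfl⟩, central_fixed W MA a ha⟩
  · rintro x ⟨⟨c, rfl⟩, hxfix⟩ n hn
    have hy : W.swIdS c ∈ W.AL := swIdS_mem_AL W c
    have hz : W.Sinv (W.swIdS c) ∈ W.AR := AL_Sinv_mem W hy
    have hz1 : MA.act (W.Sinv (W.swIdS c)) 1 = MA.act c 1 := by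
      rw [actAR_S_one W MA hz, W.S_Sinv, ← MA.act_unit]
    have h2 : n * MA.act c 1 = MA.act (W.Sinv (W.swIdS c)) n := by
      rw [actAR W MA hz n, hz1]
    have h3 : MA.act (W.Sinv (W.swIdS c)) n = MA.act (W.Sinv (W.swIdS c)) 1 * n := by
      have h4 := hn (W.Sinv (W.swIdS c)) 1
      rwa [one_mul] at h4
    show MA.act c 1 * n = n * MA.act c 1
    rw [h2, h3, hz1]
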